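/- Let λ > 1 and define θ'(s) = cos θ(s) + λ. Then the function θ(s) implicitly defined by the curve α(s) = (−λs + 2 arctan(√((λ+1)/(λ−1)) tan((s/2)√(λ²−1))), log(λ − cos(s√(λ²−1)))) satisfies that α is parametrized by arc length, i.e., α₁'(s)² + α₃'(s)² = 1 for all s where the parametrization is defined. -/

import Mathlib

open Real

theorem stmt_0 (lam : ℝ) (hlam : 1 < lam)
    (a1 a3 : ℝ → ℝ)
    (ha1 : ∀ s, a1 s = -lam * s +
      2 * arctan (Real.sqrt ((lam + 1) / (lam - 1)) * Real.tan (s / 2 * Real.sqrt (lam ^ 2 - 1))))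
    (ha3 : ∀ s, a3 s = Real.log (lam - Real.cos (s * Real.sqrt (lam ^ 2 - 1))))
    (s : ℝ) (hs : Real.cos (s / 2 * Real.sqrt (lam ^ 2 - 1)) ≠ 0) :
    (deriv a1 s) ^ 2 + (deriv a3 s) ^ 2 = 1 := by
  set k := Real.sqrt (lam ^ 2 - 1) with hk
  set c := Real.sqrt ((lam + 1) / (lam - 1)) with hc
  have hlam1 : (0:ℝ) < lam - 1 := by linarith
  have hlam2 : (0:ℝ) < lam + 1 := by linarith
  have hk2 : k ^ 2 = lam ^ 2 - 1 := Real.sq_sqrt (by nlinarith)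
  have hck : c * k = lam + 1 := by
    rw [hc, hk, ← Real.sqrt_mul (by positivity),
      show (lam + 1) / (lam - 1) * (lam ^ 2 - 1) = (lam + 1) ^ 2 by field_simp; ring]
    exact Real.sqrt_sq (by linarith)
  have hc2 : c ^ 2 = (lam + 1) / (lam - 1) := Real.sq_sqrt (by positivity)
  set C := Real.cos (s / 2 * k) with hC
  set S := Real.sin (s / 2 * k) with hS
  have hSC : S ^ 2 + C ^ 2 = 1 := Real.sin_sq_add_cos_sq _
  set t := S / C with ht
  have hSt : S = t * C := by rw [ht, div_mul_cancel₀ S hs]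
  have hC2 : C ^ 2 * (1 + t ^ 2) = 1 := by
    have : (t * C) ^ 2 + C ^ 2 = 1 := by rw [← hSt]; exact hSC
    nlinarith [this]
  have htan : Real.tan (s / 2 * k) = t := by rw [Real.tan_eq_sin_div_cos]
  have hcos2 : Real.cos (s * k) = C ^ 2 - S ^ 2 := by
    rw [show s * k = 2 * (s / 2 * k) by ring, Real.cos_two_mul]
    nlinarith [hSC]
  have hsin2 : Real.sin (s * k) = 2 * S * C := by
    rw [show s * k = 2 * (s / 2 * k) by ring, Real.sin_two_mul]
  set D := (lam - 1) + (lam + 1) * t ^ 2 with hD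
  have hDpos : 0 < D := by nlinarith [sq_nonneg t]
  -- derivative of a1
  have hu : HasDerivAt (fun x : ℝ => x / 2 * k) (1 / 2 * k) s := by
    simpa using ((hasDerivAt_id s).div_const 2).mul_const k
  have htanD : HasDerivAt (fun x : ℝ => Real.tan (x / 2 * k))
      (1 / C ^ 2 * (1 / 2 * k)) s := by have := (Real.hasDerivAt_tan hs).comp s hu; exact this
  have harctanD : HasDerivAt (fun x : ℝ => Real.arctan (c * Real.tan (x / 2 * k)))
      (1 / (1 + (c * Real.tan (s / 2 * k)) ^ 2) * (c * (1 / C ^ 2 * (1 / 2 * k)))) s :=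
    (Real.hasDerivAt_arctan _).comp s (htanD.const_mul c)
  have ha1D : HasDerivAt a1
      (-lam + 2 * (1 / (1 + (c * Real.tan (s / 2 * k)) ^ 2) * (c * (1 / C ^ 2 * (1 / 2 * k))))) s := by
    have : HasDerivAt (fun x : ℝ => -lam * x +
        2 * Real.arctan (c * Real.tan (x / 2 * k)))
        (-lam * 1 + 2 * (1 / (1 + (c * Real.tan (s / 2 * k)) ^ 2) * (c * (1 / C ^ 2 * (1 / 2 * k))))) s :=
      ((hasDerivAt_id s).const_mul (-lam)).add (harctanD.const_mul 2)
    have he : a1 = fun x : ℝ => -lam * x + 2 * Real.arctan (c * Real.tan (x / 2 * k)) := by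
      funext x; exact ha1 x
    rw [he]; simpa using this
  -- derivative of a3
  have hne3 : lam - Real.cos (s * k) ≠ 0 := by
    have := Real.cos_le_one (s * k); nlinarith
  have hinner : HasDerivAt (fun x : ℝ => lam - Real.cos (x * k))
      (Real.sin (s * k) * k) s := by
    have hid : HasDerivAt (fun x : ℝ => x * k) k s := by
      simpa using (hasDerivAt_id s).mul_const k
    have h1 : HasDerivAt (fun x : ℝ => Real.cos (x * k)) (-Real.sin (s * k) * k) s :=
      by have := (Real.hasDerivAt_cos (s * k)).comp s hid; exact this
    simpa using (h1.const_sub lam)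
  have ha3D : HasDerivAt a3 (Real.sin (s * k) * k / (lam - Real.cos (s * k))) s := by
    have he : a3 = fun x : ℝ => Real.log (lam - Real.cos (x * k)) := by
      funext x; exact ha3 x
    rw [he]
    exact hinner.log hne3
  rw [ha1D.deriv, ha3D.deriv]
  -- closed forms
  have hCne : C ≠ 0 := hs
  have hA : (-lam + 2 * (1 / (1 + (c * Real.tan (s / 2 * k)) ^ 2) * (c * (1 / C ^ 2 * (1 / 2 * k)))))
      = ((lam - 1) - (lam + 1) * t ^ 2) / D := by
    rw [htan]
    have e1 : (c * t) ^ 2 = (lam + 1) / (lam - 1) * t ^ 2 := by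
      rw [mul_pow, hc2]
    have e2 : 1 / C ^ 2 = 1 + t ^ 2 := by
      field_simp
      linarith [hC2]
    rw [e1, e2]
    have e3 : c * ((1 + t ^ 2) * (1 / 2 * k)) = (lam + 1) * (1 + t ^ 2) / 2 := by
      rw [show c * ((1 + t ^ 2) * (1 / 2 * k)) = (c * k) * (1 + t ^ 2) / 2 by ring, hck]
    rw [e3]
    have hden : 1 + (lam + 1) / (lam - 1) * t ^ 2 ≠ 0 := by
      have : 0 < 1 + (lam + 1) / (lam - 1) * t ^ 2 := by positivity
      linarith
    field_simp
    ring
  have hB : Real.sin (s * k) * k / (lam - Real.cos (s * k)) = 2 * k * t / D := by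
    rw [hsin2, hcos2, hSt]
    have hden2 : lam - (C ^ 2 - (t * C) ^ 2) ≠ 0 := by
      rw [← hSt, ← hcos2]; exact hne3
    rw [div_eq_div_iff hden2 hDpos.ne']
    linear_combination (2 * k * t * lam) * hC2
  rw [hA, hB]
  clear_value t D
  have hsum : ((lam - 1 - (lam + 1) * t ^ 2) / D) ^ 2 + (2 * k * t / D) ^ 2
      = ((lam - 1 - (lam + 1) * t ^ 2) ^ 2 + (2 * k * t) ^ 2) / D ^ 2 := by ring
  rw [hsum, div_eq_one_iff_eq (by positivity)]
  linear_combination (4 * t ^ 2) * hk2 - (D + (lam - 1 + (lam + 1) * t ^ 2)) * hD
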